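/- Let R be an algebraic curvature tensor on an inner product space (with the symmetries R(X,Y)Z = -R(Y,X)Z, (R(X,Y)Z,W) = (R(Z,W)X,Y), and the first Bianchi identity). Suppose X, Y are vectors and W, U are vectors such that (R(W,Y)W, X) = 0 and (R(U,Y)U, X) = 0 and (R(W+U,Y)(W+U), X) = 0. Then (R(W,Y)U, X) = (1/2)(R(X,Y)U, W). -/
import Mathlib


open RealInnerProductSpace

/-- For an algebraic curvature tensor `R`, if
`(R(W,Y)W, X) = (R(U,Y)U, X) = (R(W+U,Y)(W+U), X) = 0`, then
`(R(W,Y)U, X) = (1/2)(R(X,Y)U, W)`. -/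
theorem stmt_1 {E : Type*} [NormedAddCommGroup E] [InnerProductSpace ℝ E]
    (R : E → E → E → E)
    (hadd1 : ∀ a b c d, R (a + b) c d = R a c d + R b c d)
    (hadd3 : ∀ a b c d, R a b (c + d) = R a b c + R a b d)
    (hanti : ∀ a b c, R a b c = -R b a c)
    (hpair : ∀ a b c d, ⟪R a b c, d⟫ = ⟪R c d a, b⟫)
    (hbianchi : ∀ a b c, R a b c + R b c a + R c a b = 0)
    (X Y W U : E)
    (hW : ⟪R W Y W, X⟫ = 0)
    (hU : ⟪R U Y U, X⟫ = 0)
    (hWU : ⟪R (W + U) Y (W + U), X⟫ = 0) :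
    ⟪R W Y U, X⟫ = (1 / 2 : ℝ) * ⟪R X Y U, W⟫ := by
  have h1 : ⟪R W Y U, X⟫ + ⟪R U Y W, X⟫ = 0 := by
    rw [hadd1, hadd3, hadd3] at hWU
    simp only [inner_add_left] at hWU
    linarith
  have h2 : ⟪R W Y U, X⟫ + ⟪R Y U W, X⟫ + ⟪R U W Y, X⟫ = 0 := by
    have := congrArg (fun v => ⟪v, X⟫) (hbianchi W Y U)
    simpa [inner_add_left] using this
  have h3 : ⟪R Y U W, X⟫ = -⟪R U Y W, X⟫ := by
    rw [hanti Y U W, inner_neg_left]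
  have h4 : ⟪R U W Y, X⟫ = -⟪R X Y U, W⟫ := by
    rw [hpair U W Y X, hanti Y X U, inner_neg_left]
  linarith
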